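/- Let H be a real Hilbert space, let λ > 0, let B : H → H be a monotone single-valued map, and let J_B : H → H satisfy J_B(w) + λB(J_B(w)) = w for all w ∈ H (i.e. J_B is the resolvent of λB). Let J_A : H → H be any map. Suppose a sequence (x_k) in H satisfies the implicit recursion x_{k+1} = J_A(x_k − λB(x_k)) − λ(B(x_{k+1}) − B(x_k)) for all k, and define z_k = x_k + λB(x_k). Then for all k, z_{k+1} = z_k + J_A(2 J_B(z_k) − z_k) − J_B(z_k); that is, (z_k) follows the classical Douglas–Rachford iteration. -/
import Mathlib


open scoped RealInnerProductSpace

/-- The implicit recursion `x_{k+1} = J_A(x_k − λB(x_k)) − λ(B(x_{k+1}) − B(x_k))`,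
rewritten in terms of `z_k = x_k + λB(x_k)`, is exactly the classical
Douglas–Rachford iteration `z_{k+1} = z_k + J_A(2J_B(z_k) − z_k) − J_B(z_k)`. -/
theorem statement7
    {H : Type*} [NormedAddCommGroup H] [InnerProductSpace ℝ H] [CompleteSpace H]
    (lam : ℝ) (hlam : 0 < lam)
    (B : H → H) (hB : ∀ u v : H, (0 : ℝ) ≤ ⟪B u - B v, u - v⟫)
    (JB : H → H) (hJB : ∀ w : H, JB w + lam • B (JB w) = w)
    (JA : H → H)
    (x : ℕ → H)
    (hrec : ∀ k : ℕ,
      x (k + 1) = JA (x k - lam • B (x k)) - lam • (B (x (k + 1)) - B (x k)))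
    (z : ℕ → H) (hz : ∀ k : ℕ, z k = x k + lam • B (x k)) :
    ∀ k : ℕ, z (k + 1) = z k + JA ((2 : ℝ) • JB (z k) - z k) - JB (z k) := by
  -- injectivity of I + λB
  have hinj : ∀ u v : H, u + lam • B u = v + lam • B v → u = v := by
    intro u v huv
    have h0 : (u - v) + lam • (B u - B v) = 0 := by
      rw [smul_sub,
        show u - v + (lam • B u - lam • B v) = (u + lam • B u) - (v + lam • B v) by abel,
        huv, sub_self]
    have hd : u - v = -(lam • (B u - B v)) := eq_neg_of_add_eq_zero_left h0
    have h1 : ⟪u - v, u - v⟫ = -(lam * ⟪B u - B v, u - v⟫) := by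
      rw [hd, inner_neg_left, inner_smul_left]
      norm_num
    have h2 : (0:ℝ) ≤ lam * ⟪B u - B v, u - v⟫ := mul_nonneg hlam.le (hB u v)
    have h3 : ⟪u - v, u - v⟫ ≤ 0 := by rw [h1]; linarith
    have h4 : u - v = 0 := by
      have := real_inner_self_nonneg (x := u - v)
      have : ⟪u - v, u - v⟫ = 0 := le_antisymm h3 this
      exact inner_self_eq_zero.mp this
    exact sub_eq_zero.mp h4
  intro k
  have hJBz : JB (z k) = x k := by
    apply hinj
    rw [hJB (z k), hz k]
  have harg : (2 : ℝ) • JB (z k) - z k = x k - lam • B (x k) := by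
    rw [hJBz, hz k, two_smul]; abel
  rw [harg, hJBz, hz (k+1), hz k]
  calc x (k+1) + lam • B (x (k+1))
      = (JA (x k - lam • B (x k)) - lam • (B (x (k+1)) - B (x k))) + lam • B (x (k+1)) := by
        rw [← hrec k]
    _ = x k + lam • B (x k) + JA (x k - lam • B (x k)) - x k := by rw [smul_sub]; abel
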